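/- Discrete energy decay identity (Theorem 4.2(ii)): assume the data are time-independent (ℓ^k = ℓ, g^k = g), let (u^k, φ^k) ∈ (g + V) × Ψ, k = 0, …, N, be the solution of the time-discrete model, and set E^k := E(u^k, φ^k), D̄_τ ρ^k := (ρ^k − ρ^{k−1})/τ. Then for every k = 1, …, N: D̄_τ E^k + (ατ/2)‖D̄_τ φ^k‖_Ψ² + (τ/2)⟪C(D̄_τ(e u^k − φ^k)), D̄_τ(e u^k − φ^k)⟫_Ψ = −η‖D̄_τ φ^k‖_Ψ² ≤ 0. -/
import Mathlib


open scoped RealInnerProductSpace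

private lemma quadExpand {Ψ : Type*} [NormedAddCommGroup Ψ] [InnerProductSpace ℝ Ψ]
    (C : Ψ →L[ℝ] Ψ) (hCsym : ∀ φ ψ : Ψ, ⟪C φ, ψ⟫ = ⟪φ, C ψ⟫) (x y : Ψ) :
    ⟪C x, x⟫ - ⟪C y, y⟫ = 2 * ⟪C x, x - y⟫ - ⟪C (x - y), x - y⟫ := by
  have hs : ⟪C y, x⟫ = ⟪C x, y⟫ := by rw [hCsym, real_inner_comm]
  rw [map_sub, inner_sub_left, inner_sub_right, inner_sub_right, hs]
  ring

/-- Discrete energy decay identity (Theorem 4.2(ii)): for the solution of the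
time-discrete model with time-independent data,
`D̄_τ Eᵏ + (ατ/2)‖D̄_τ φᵏ‖² + (τ/2)⟪C D̄_τ(e uᵏ − φᵏ), D̄_τ(e uᵏ − φᵏ)⟫ = −η‖D̄_τ φᵏ‖² ≤ 0`. -/
theorem stmt_10
    {X Ψ : Type*}
    [NormedAddCommGroup X] [InnerProductSpace ℝ X] [CompleteSpace X]
    [NormedAddCommGroup Ψ] [InnerProductSpace ℝ Ψ] [CompleteSpace Ψ]
    (V : Submodule ℝ X) (hV : IsClosed (V : Set X))
    (e : X →L[ℝ] Ψ) (C : Ψ →L[ℝ] Ψ)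
    (hCsym : ∀ φ ψ : Ψ, ⟪C φ, ψ⟫ = ⟪φ, C ψ⟫)
    (cstar : ℝ) (hcstar : 0 < cstar)
    (hCcoer : ∀ ψ : Ψ, cstar * ‖ψ‖ ^ 2 ≤ ⟪C ψ, ψ⟫)
    (c₀ : ℝ) (hc₀ : 0 < c₀)
    (hacoer : ∀ v ∈ V, c₀ * ‖v‖ ^ 2 ≤ ⟪C (e v), e v⟫)
    (ℓ : X →L[ℝ] ℝ) (g : X) (η α : ℝ) (hη : 0 < η) (hα : 0 ≤ α)
    (τ : ℝ) (hτ : 0 < τ) (N : ℕ)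
    (E : X → Ψ → ℝ)
    (hE : ∀ u φ, E u φ =
      (1 / 2) * ⟪C (e u - φ), e u - φ⟫ + (α / 2) * ‖φ‖ ^ 2 - ℓ u)
    (u : ℕ → X) (φ : ℕ → Ψ)
    (hmem : ∀ k ≤ N, u k - g ∈ V)
    (heq1 : ∀ k ≤ N, ∀ v ∈ V, ⟪C (e (u k) - φ k), e v⟫ = ℓ v)
    (heq2 : ∀ k, 1 ≤ k → k ≤ N →
      (η / τ) • (φ k - φ (k - 1)) + α • φ k - C (e (u k) - φ k) = 0) :
    ∀ k, 1 ≤ k → k ≤ N →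
      (E (u k) (φ k) - E (u (k - 1)) (φ (k - 1))) / τ
        + (α * τ / 2) * ‖τ⁻¹ • (φ k - φ (k - 1))‖ ^ 2
        + (τ / 2) * ⟪C (τ⁻¹ • ((e (u k) - φ k) - (e (u (k - 1)) - φ (k - 1)))),
            τ⁻¹ • ((e (u k) - φ k) - (e (u (k - 1)) - φ (k - 1)))⟫
        = -(η * ‖τ⁻¹ • (φ k - φ (k - 1))‖ ^ 2) ∧
      -(η * ‖τ⁻¹ • (φ k - φ (k - 1))‖ ^ 2) ≤ 0 := by

  intro k hk1 hkN
  have hk' : k - 1 ≤ N := le_trans (Nat.sub_le k 1) hkN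
  set w : Ψ := e (u k) - φ k with hw
  set w' : Ψ := e (u (k-1)) - φ (k-1) with hw'
  set a : Ψ := φ k - φ (k-1) with ha
  have hmemδ : u k - u (k-1) ∈ V := by
    have h := V.sub_mem (hmem k hkN) (hmem (k-1) hk')
    simpa using h
  have hℓ : ⟪C w, e (u k - u (k-1))⟫ = ℓ (u k - u (k-1)) :=
    heq1 k hkN _ hmemδ
  have hC : C w = (η/τ) • a + α • φ k :=
    (sub_eq_zero.mp (heq2 k hk1 hkN)).symm
  have hτ0 : τ ≠ 0 := ne_of_gt hτ
  -- key scalar abbreviations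
  have hsplit : e (u k - u (k-1)) = (w - w') + a := by
    rw [hw, hw', ha, map_sub]; abel
  have hℓ2 : ℓ (u k) - ℓ (u (k-1)) = ⟪C w, w - w'⟫ + ⟪C w, a⟫ := by
    rw [← map_sub ℓ, ← hℓ, hsplit, inner_add_right]
  have hCwa : ⟪C w, a⟫ = (η/τ) * ‖a‖^2 + α * ⟪φ k, a⟫ := by
    rw [hC, inner_add_left, real_inner_smul_left, real_inner_smul_left,
      real_inner_self_eq_norm_sq]
  -- quadratic identities
  have hsymm : ⟪C w', w⟫ = ⟪C w, w'⟫ := by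
    rw [hCsym, real_inner_comm]
  have hQ1 : ⟪C w, w⟫ - ⟪C w', w'⟫ = 2 * ⟪C w, w - w'⟫ - ⟪C (w - w'), w - w'⟫ :=
    quadExpand C hCsym w w' 
  have hQ2 : ‖φ k‖^2 - ‖φ (k-1)‖^2 = 2 * ⟪φ k, a⟫ - ‖a‖^2 := by
    rw [← real_inner_self_eq_norm_sq (φ k), ← real_inner_self_eq_norm_sq (φ (k-1)),
      ← real_inner_self_eq_norm_sq a, ha, inner_sub_left, inner_sub_right,
      inner_sub_right, real_inner_comm (φ (k-1)) (φ k)]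
    ring
  -- scalings
  have hna : ‖τ⁻¹ • a‖^2 = τ⁻¹ * τ⁻¹ * ‖a‖^2 := by
    rw [norm_smul, norm_inv, Real.norm_eq_abs, abs_of_pos hτ]
    ring
  have hnw : ⟪C (τ⁻¹ • (w - w')), τ⁻¹ • (w - w')⟫
      = τ⁻¹ * τ⁻¹ * ⟪C (w - w'), w - w'⟫ := by
    rw [map_smul, real_inner_smul_left, real_inner_smul_right]
    ring
  have hEdiff : E (u k) (φ k) - E (u (k-1)) (φ (k-1))
      = - (1/2) * ⟪C (w - w'), w - w'⟫ - (α/2) * ‖a‖^2 - (η/τ) * ‖a‖^2 := by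
    rw [hE, hE, ← hw, ← hw']
    have := hℓ2
    rw [hCwa] at this
    linear_combination (1/2) * hQ1 + (α/2) * hQ2 - this
  constructor
  · rw [hEdiff, hna, hnw]
    field_simp
    ring
  · simpa using neg_nonpos.mpr (mul_nonneg hη.le (sq_nonneg ‖τ⁻¹ • a‖))
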